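/- Let K be a field and let S ⊆ ℝ be a nonempty convex subset. Then every idempotent endomorphism of the interval module Region(S) is trivial: if e : Region(S) ⟶ Region(S) is a natural transformation with e ≫ e = e, then e = 0 or e is the identity. Consequently Region(S) is indecomposable. -/

import Mathlib

open CategoryTheory CategoryTheory.Limits Classical

noncomputable section

/-- The value of the interval module `Region S` at `t`: a copy of `K` when `t ∈ S`
and `0` otherwise, realized as a submodule of `K`. -/
def regionCarrier (K : Type) [Field K] {G : Type} (S : Set G) (t : G) :
    Submodule K K where
  carrier := {x : K | x = 0 ∨ t ∈ S}
  zero_mem' := Or.inl rfl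
  add_mem' := by
    rintro a b (rfl | h) (rfl | h)
    · exact Or.inl (by simp)
    · exact Or.inr h
    · exact Or.inr h
    · exact Or.inr h
  smul_mem' := by
    rintro c x (rfl | h)
    · exact Or.inl (by simp)
    · exact Or.inr h

/-- The structure map of the interval module: the "identity" of `K` when
`[s, t] ⊆ S` and `0` otherwise. -/
def regionMap (K : Type) [Field K] {G : Type} [LinearOrder G] (S : Set G)
    {s t : G} (hst : s ≤ t) :
    regionCarrier K S s →ₗ[K] regionCarrier K S t :=
  if h : Set.Icc s t ⊆ S then
    { toFun := fun x => ⟨(x : K), Or.inr (h ⟨hst, le_rfl⟩)⟩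
      map_add' := fun _ _ => rfl
      map_smul' := fun _ _ => rfl }
  else 0

lemma regionMap_apply_coe (K : Type) [Field K] {G : Type} [LinearOrder G]
    (S : Set G) {s t : G} (hst : s ≤ t) (x : regionCarrier K S s) :
    ((regionMap K S hst x : regionCarrier K S t) : K) =
      if Set.Icc s t ⊆ S then (x : K) else 0 := by
  by_cases h : Set.Icc s t ⊆ S
  · rw [regionMap, dif_pos h, if_pos h]
    rfl
  · rw [regionMap, dif_neg h, if_neg h]
    rfl

/-- The interval module (region module) of a subset `S` of a linear order `G`:
the persistence module whose value at `t` is `K` if `t ∈ S` and `0` otherwise, with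
structure map for `s ≤ t` the identity of `K` when `[s, t] ⊆ S` and `0` otherwise. -/
def Region (K : Type) [Field K] {G : Type} [LinearOrder G] (S : Set G) :
    G ⥤ ModuleCat.{0} K where
  obj t := ModuleCat.of K (regionCarrier K S t)
  map {s t} f := ModuleCat.ofHom (regionMap K S (leOfHom f))
  map_id := by
    intro t
    apply ModuleCat.hom_ext
    apply LinearMap.ext
    intro x
    change regionMap K S (le_refl t) x = x
    apply Subtype.ext
    rw [regionMap_apply_coe]
    by_cases h : Set.Icc t t ⊆ S
    · rw [if_pos h]
    · have ht : t ∉ S := fun hts => h (by rw [Set.Icc_self]; simpa using hts)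
      rw [if_neg h]
      rcases x.2 with hx | hx
      · exact hx.symm
      · exact absurd hx ht
  map_comp := by
    intro s t u f g
    have hst : s ≤ t := leOfHom f
    have htu : t ≤ u := leOfHom g
    apply ModuleCat.hom_ext
    apply LinearMap.ext
    intro x
    change regionMap K S (hst.trans htu) x = regionMap K S htu (regionMap K S hst x)
    apply Subtype.ext
    rw [regionMap_apply_coe, regionMap_apply_coe, regionMap_apply_coe]
    by_cases h1 : Set.Icc s u ⊆ S
    · have h2 : Set.Icc s t ⊆ S := fun v hv => h1 ⟨hv.1, hv.2.trans htu⟩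
      have h3 : Set.Icc t u ⊆ S := fun v hv => h1 ⟨hst.trans hv.1, hv.2⟩
      rw [if_pos h1, if_pos h2, if_pos h3]
    · rw [if_neg h1]
      by_cases h3 : Set.Icc t u ⊆ S
      · have h2 : ¬ Set.Icc s t ⊆ S := by
          intro h2
          exact h1 fun v hv => by
            rcases le_total v t with hvt | htv
            · exact h2 ⟨hv.1, hvt⟩
            · exact h3 ⟨htv, hv.2⟩
        rw [if_pos h3, if_neg h2]
      · rw [if_neg h3]

end

/-- an interval module over a nonempty convex subset of ℝ has only
trivial idempotent endomorphisms; consequently it is indecomposable. -/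
theorem region_idempotent_trivial (K : Type) [Field K]
    (S : Set ℝ) (hS : S.Nonempty) (hconv : S.OrdConnected) :
    (¬ IsZero (Region K S)) ∧
      ∀ e : Region K S ⟶ Region K S, e ≫ e = e →
        e = 0 ∨ e = 𝟙 (Region K S) := by
  obtain ⟨t0, ht0⟩ := hS
  constructor
  · intro hz
    have h : 𝟙 (Region K S) = 0 := hz.eq_of_src _ _
    have h2 : (((𝟙 (Region K S) : Region K S ⟶ Region K S).app t0).hom :
        regionCarrier K S t0 →ₗ[K] regionCarrier K S t0) =
        (((0 : Region K S ⟶ Region K S).app t0).hom :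
        regionCarrier K S t0 →ₗ[K] regionCarrier K S t0) := by rw [h]
    have h3 := congrArg (fun g => ((g (⟨1, Or.inr ht0⟩ : regionCarrier K S t0) :
        regionCarrier K S t0) : K)) h2
    have hL : (((𝟙 (Region K S) : Region K S ⟶ Region K S).app t0).hom :
        regionCarrier K S t0 →ₗ[K] regionCarrier K S t0)
        (⟨1, Or.inr ht0⟩ : regionCarrier K S t0) = ⟨1, Or.inr ht0⟩ := by
      rw [NatTrans.id_app]
      rfl
    have hR : (((0 : Region K S ⟶ Region K S).app t0).hom :
        regionCarrier K S t0 →ₗ[K] regionCarrier K S t0)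
        (⟨1, Or.inr ht0⟩ : regionCarrier K S t0) = 0 := rfl
    rw [hL, hR] at h3
    exact one_ne_zero (α := K) h3
  · intro e he
    set E : ∀ t, regionCarrier K S t →ₗ[K] regionCarrier K S t := fun t => (e.app t).hom with hE
    set c : ∀ t, t ∈ S → K := fun t ht =>
      ((E t ⟨1, Or.inr ht⟩ : regionCarrier K S t) : K) with hc
    have key : ∀ t (ht : t ∈ S), ∀ x : regionCarrier K S t,
        ((E t x : regionCarrier K S t) : K) = c t ht * (x : K) := by
      intro t ht x
      have hx : x = (x : K) • (⟨1, Or.inr ht⟩ : regionCarrier K S t) := by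
        apply Subtype.ext; simp
      rw [hx, map_smul]
      simp [mul_comm]
      exact Or.inl rfl
    have hidem : ∀ t (ht : t ∈ S), c t ht = 0 ∨ c t ht = 1 := by
      intro t ht
      have h2 : E t (E t ⟨1, Or.inr ht⟩) = E t ⟨1, Or.inr ht⟩ := by
        have := congrArg (fun f => NatTrans.app f t) he
        exact congrArg (fun (g : (Region K S).obj t ⟶ (Region K S).obj t) =>
          g.hom (⟨1, Or.inr ht⟩ : regionCarrier K S t)) this
      have h4 : c t ht * c t ht = c t ht := by
        have h5 := key t ht (E t ⟨1, Or.inr ht⟩)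
        rw [h2] at h5
        exact h5.symm
      have h5 : c t ht * (c t ht - 1) = 0 := by
        rw [mul_sub, mul_one, h4, sub_self]
      rcases mul_eq_zero.mp h5 with h | h
      · exact Or.inl h
      · exact Or.inr (sub_eq_zero.mp h)
    have hconst : ∀ s (hs : s ∈ S) t (ht : t ∈ S), s ≤ t → c s hs = c t ht := by
      intro s hs t ht hst
      have hIcc : Set.Icc s t ⊆ S := hconv.out hs ht
      have hnat := e.naturality (homOfLE hst)
      have h3 : E t (regionMap K S hst ⟨1, Or.inr hs⟩)
          = regionMap K S hst (E s ⟨1, Or.inr hs⟩) := by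
        exact congrArg (fun (g : (Region K S).obj s ⟶ (Region K S).obj t) =>
          g.hom (⟨1, Or.inr hs⟩ : regionCarrier K S s)) hnat
      have hmap : regionMap K S hst (⟨1, Or.inr hs⟩ : regionCarrier K S s)
          = (⟨1, Or.inr ht⟩ : regionCarrier K S t) := by
        apply Subtype.ext
        rw [regionMap_apply_coe, if_pos hIcc]
      rw [hmap] at h3
      have h4 : ((regionMap K S hst (E s ⟨1, Or.inr hs⟩) :
          regionCarrier K S t) : K) = c s hs := by
        rw [regionMap_apply_coe, if_pos hIcc]
      have h5 := congrArg (fun y : regionCarrier K S t => (y : K)) h3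
      rw [h4] at h5
      exact h5.symm
    have hall : ∀ t (ht : t ∈ S), c t ht = c t0 ht0 := by
      intro t ht
      rcases le_total t t0 with h | h
      · exact hconst t ht t0 ht0 h
      · exact (hconst t0 ht0 t ht h).symm
    have zout : ∀ t, t ∉ S → ∀ x : regionCarrier K S t, x = 0 := by
      intro t ht x
      apply Subtype.ext
      rcases x.2 with h | h
      · exact h
      · exact absurd h ht
    rcases hidem t0 ht0 with h0 | h1
    · left
      apply NatTrans.ext
      funext t
      apply ModuleCat.hom_ext
      apply LinearMap.ext
      intro x
      show E t x = (((0 : Region K S ⟶ Region K S).app t).hom :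
        regionCarrier K S t →ₗ[K] regionCarrier K S t) x
      have hR : (((0 : Region K S ⟶ Region K S).app t).hom :
        regionCarrier K S t →ₗ[K] regionCarrier K S t) x = 0 := rfl
      rw [hR]
      by_cases ht : t ∈ S
      · apply Subtype.ext
        rw [key t ht x, hall t ht, h0]
        simp
        rfl
      · rw [zout t ht x, map_zero]
        rfl
    · right
      apply NatTrans.ext
      funext t
      apply ModuleCat.hom_ext
      apply LinearMap.ext
      intro x
      show E t x = (((𝟙 (Region K S) : Region K S ⟶ Region K S).app t).hom :
        regionCarrier K S t →ₗ[K] regionCarrier K S t) x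
      have hR : (((𝟙 (Region K S) : Region K S ⟶ Region K S).app t).hom :
        regionCarrier K S t →ₗ[K] regionCarrier K S t) x = x := by
        rw [NatTrans.id_app]; rfl
      rw [hR]
      by_cases ht : t ∈ S
      · apply Subtype.ext
        rw [key t ht x, hall t ht, h1]
        simp
      · rw [zout t ht x, map_zero]
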